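/- Let (N,v) be a TU-game and x a pre-imputation. If x fails Property I — that is, there exist ψ ∈ ℝ with D(ψ,x) ≠ ∅ and y ∈ ℝ^N with y(N) = 0, y(S) ≥ 0 for all S ∈ D(ψ,x), and y(S₀) > 0 for some S₀ ∈ D(ψ,x) — then x is not a lexicographic minimizer of θ over the pre-imputations: there exists a pre-imputation z with θ(z) <_L θ(x). -/

import Mathlib

open Finset

noncomputable def excess {α : Type*} (v : Finset α → ℝ) (x : α → ℝ) (S : Finset α) : ℝ :=
  v S - ∑ k ∈ S, x k

noncomputable def Dset {α : Type*} [Fintype α] [DecidableEq α]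
    (v : Finset α → ℝ) (x : α → ℝ) (ψ : ℝ) : Finset (Finset α) :=
  (Finset.univ.powerset.erase (∅ : Finset α)).filter (fun S => ψ ≤ excess v x S)

def indVec {α : Type*} [DecidableEq α] (S : Finset α) : α → ℝ := fun k => if k ∈ S then 1 else 0

def IsBalanced {α : Type*} [Fintype α] [DecidableEq α] (B : Finset (Finset α)) : Prop :=
  ∃ w : Finset α → ℝ, (∀ S ∈ B, 0 < w S) ∧ (∑ S ∈ B, w S • indVec S) = fun _ => (1:ℝ)

noncomputable def theta {α : Type*} [Fintype α] [DecidableEq α]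
    (v : Finset α → ℝ) (x : α → ℝ) : List ℝ :=
  List.insertionSort (· ≥ ·) (((Finset.univ.powerset.erase (∅ : Finset α)).toList).map (excess v x))

def lexLe (l₁ l₂ : List ℝ) : Prop := l₁ = l₂ ∨ List.Lex (· < ·) l₁ l₂

open List

-- A: countP monotone under Forall₂ ≤
lemma countP_le_of_forall₂ (c : ℝ) {l₁ l₂ : List ℝ} (h : List.Forall₂ (· ≤ ·) l₁ l₂) :
    l₁.countP (fun a => decide (c ≤ a)) ≤ l₂.countP (fun a => decide (c ≤ a)) := by
  induction h with
  | nil => simp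
  | @cons a b l₁ l₂ hab _ ih =>
    rw [countP_cons, countP_cons]
    have hle : (if decide (c ≤ a) = true then 1 else 0) ≤ (if decide (c ≤ b) = true then 1 else 0) := by
      rcases le_or_gt c a with h1 | h1
      · rw [if_pos (by simpa using h1), if_pos (by simp [le_trans h1 hab])]
      · rw [if_neg (by simpa using not_le.mpr h1)]
        exact Nat.zero_le _
    omega

-- B: sorted + countP dominance + equal length ⇒ Forall₂ ≤
lemma forall₂_of_sorted_countP : ∀ {l₁ l₂ : List ℝ}, l₁.Pairwise (· ≥ ·) → l₂.Pairwise (· ≥ ·) →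
    l₁.length = l₂.length →
    (∀ c : ℝ, l₁.countP (fun a => decide (c ≤ a)) ≤ l₂.countP (fun a => decide (c ≤ a))) →
    List.Forall₂ (· ≤ ·) l₁ l₂ := by
  intro l₁
  induction l₁ with
  | nil => intro l₂ _ _ hl _; simp [(List.length_eq_zero_iff.mp hl.symm)]
  | cons a s ih =>
    intro l₂ hs ht hl hc
    cases l₂ with
    | nil => simp at hl
    | cons b t =>
      have hab : a ≤ b := by
        have h1 := hc a
        have : 0 < (a :: s).countP (fun x => decide (a ≤ x)) := by
          rw [countP_cons]; simp
        have h2 : 0 < (b :: t).countP (fun x => decide (a ≤ x)) := lt_of_lt_of_le this h1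
        rw [List.countP_pos_iff] at h2
        obtain ⟨e, he, hae⟩ := h2
        simp at hae
        rcases List.mem_cons.mp he with rfl | he
        · exact hae
        · exact le_trans hae (List.rel_of_pairwise_cons ht he)
      refine List.Forall₂.cons hab (ih hs.of_cons ht.of_cons (by simpa using hl) ?_)
      intro c
      rcases le_or_gt c a with h1 | h1
      · have h2 := hc c
        have hca : decide (c ≤ a) = true := by simp [h1]
        have hcb : decide (c ≤ b) = true := by simp [le_trans h1 hab]
        rw [countP_cons, countP_cons, hca, hcb] at h2
        omega
      · have : s.countP (fun x => decide (c ≤ x)) = 0 := by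
          rw [List.countP_eq_zero]
          intro e he
          have := List.rel_of_pairwise_cons hs he
          simp; linarith
        simp [this]

-- C: Forall₂ ≤ and ≠ gives Lex on appends
lemma lex_append : ∀ {s t : List ℝ}, List.Forall₂ (· ≤ ·) s t → s ≠ t →
    ∀ (u w : List ℝ), List.Lex (· < ·) (s ++ u) (t ++ w) := by
  intro s t h
  induction h with
  | nil => intro hne; exact absurd rfl hne
  | @cons a b s' t' hab _ ih =>
    intro hne u w
    rcases eq_or_lt_of_le hab with rfl | hlt
    · have hne' : s' ≠ t' := fun he => hne (by rw [he])
      exact List.Lex.cons (ih hne' u w)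
    · exact List.Lex.rel hlt

-- Forall₂ for maps of the same list
lemma forall₂_map_map {β : Type*} (f g : β → ℝ) : ∀ (l : List β), (∀ a ∈ l, f a ≤ g a) →
    List.Forall₂ (· ≤ ·) (l.map f) (l.map g) := by
  intro l
  induction l with
  | nil => intro; simp
  | cons a s ih => intro h; exact List.Forall₂.cons (h a (by simp)) (ih fun b hb => h b (List.mem_cons_of_mem a hb))

-- combined: sorted maps comparison
lemma sorted_le_of_pointwise {β : Type*} (f g : β → ℝ) (l : List β) (h : ∀ a ∈ l, f a ≤ g a) :
    List.Forall₂ (· ≤ ·) (List.insertionSort (· ≥ ·) (l.map f)) (List.insertionSort (· ≥ ·) (l.map g)) := by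
  have hf := List.perm_insertionSort (· ≥ ·) (l.map f)
  have hg := List.perm_insertionSort (· ≥ ·) (l.map g)
  have h2 := forall₂_map_map f g l h
  refine forall₂_of_sorted_countP (List.pairwise_insertionSort _ _) (List.pairwise_insertionSort _ _) ?_ ?_
  · rw [hf.length_eq, hg.length_eq]; simp
  · intro c
    rw [hf.countP_eq, hg.countP_eq]
    exact countP_le_of_forall₂ c h2

open Finset in
lemma list_split {α : Type*} [DecidableEq α] (A D : Finset α) (hDA : D ⊆ A) :
    (D.toList ++ (A \ D).toList).Perm A.toList := by
  rw [← Multiset.coe_eq_coe]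
  rw [← Multiset.coe_add, Finset.coe_toList, Finset.coe_toList, Finset.coe_toList, Finset.sdiff_val,
    add_tsub_cancel_of_le (Finset.val_le_iff.mpr hDA)]

lemma theta_decomp {α : Type*} [Fintype α] [DecidableEq α]
    (v : Finset α → ℝ) (w : α → ℝ) (D : Finset (Finset α))
    (hDA : D ⊆ (Finset.univ.powerset.erase (∅ : Finset α)))
    (hsep : ∀ S ∈ D, ∀ T ∈ (Finset.univ.powerset.erase (∅ : Finset α)) \ D,
      excess v w T ≤ excess v w S) :
    theta v w = List.insertionSort (· ≥ ·) ((D.toList).map (excess v w)) ++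
      List.insertionSort (· ≥ ·) ((((Finset.univ.powerset.erase (∅ : Finset α)) \ D).toList).map (excess v w)) := by
  set A := (Finset.univ.powerset.erase (∅ : Finset α)) with hA
  refine (fun hp h1 h2 => List.Perm.eq_of_pairwise' (r := (· ≥ ·)) h1 h2 hp : _ → _ → _ → _ = theta v w) ?_ ?_ ?_ |>.symm
  · calc _ ~ (D.toList).map (excess v w) ++ ((A \ D).toList).map (excess v w) :=
          (List.perm_insertionSort _ _).append (List.perm_insertionSort _ _)
      _ = ((D.toList ++ (A \ D).toList).map (excess v w)) := List.map_append.symm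
      _ ~ (A.toList).map (excess v w) := (list_split A D hDA).map _
      _ ~ theta v w := (List.perm_insertionSort _ _).symm
  · rw [List.pairwise_append]
    refine ⟨List.pairwise_insertionSort _ _, List.pairwise_insertionSort _ _, ?_⟩
    intro a ha b hb
    have ha' := (List.perm_insertionSort (· ≥ ·) _).mem_iff.mp ha
    have hb' := (List.perm_insertionSort (· ≥ ·) _).mem_iff.mp hb
    obtain ⟨S, hS, rfl⟩ := List.mem_map.mp ha'
    obtain ⟨T, hT, rfl⟩ := List.mem_map.mp hb'
    exact hsep S (Finset.mem_toList.mp hS) T (Finset.mem_toList.mp hT)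
  · exact List.pairwise_insertionSort _ _

open Finset

/-- if `x` fails Property I then `x` is not a lexicographic minimizer:
some pre-imputation `z` satisfies `θ(z) <_L θ(x)`. -/
theorem stmt7 {α : Type*} [Fintype α] [DecidableEq α] [Nonempty α]
    (v : Finset α → ℝ) (hv : v ∅ = 0)
    (x : α → ℝ) (hx : ∑ k, x k = v Finset.univ)
    (ψ : ℝ) (hne : (Dset v x ψ).Nonempty)
    (y : α → ℝ) (hy : ∑ k, y k = 0)
    (hpos : ∀ S ∈ Dset v x ψ, 0 ≤ ∑ k ∈ S, y k)
    (S₀ : Finset α) (hS₀ : S₀ ∈ Dset v x ψ) (hS₀pos : 0 < ∑ k ∈ S₀, y k) :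
    ∃ z : α → ℝ, ∑ k, z k = v Finset.univ ∧ List.Lex (· < ·) (theta v z) (theta v x) := by
  classical
  set A := (Finset.univ.powerset.erase (∅ : Finset α)) with hA
  set D := Dset v x ψ with hD
  have hDA : D ⊆ A := Finset.filter_subset _ _
  have hmemD : ∀ S ∈ D, ψ ≤ excess v x S := fun S hS => (Finset.mem_filter.mp hS).2
  have hmemDc : ∀ T ∈ A \ D, excess v x T < ψ := by
    intro T hT
    obtain ⟨hTA, hTD⟩ := Finset.mem_sdiff.mp hT
    by_contra h
    exact hTD (Finset.mem_filter.mpr ⟨hTA, not_lt.mp h⟩)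
  -- bound on coalition sums of y
  set Y : ℝ := ∑ k, |y k| with hY
  have hY0 : 0 ≤ Y := Finset.sum_nonneg fun k _ => abs_nonneg _
  have hYb : ∀ S : Finset α, |∑ k ∈ S, y k| ≤ Y := by
    intro S
    calc |∑ k ∈ S, y k| ≤ ∑ k ∈ S, |y k| := Finset.abs_sum_le_sum_abs _ _
      _ ≤ Y := Finset.sum_le_sum_of_subset_of_nonneg (Finset.subset_univ S)
            (fun k _ _ => abs_nonneg _)
  -- the gap ε
  set ε : ℝ := if h : (A \ D).Nonempty then ψ - (A \ D).sup' h (excess v x) else 1 with hε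
  have hε0 : 0 < ε := by
    rw [hε]
    split_ifs with h
    · rw [sub_pos, Finset.sup'_lt_iff]
      exact fun T hT => hmemDc T hT
    · norm_num
  have hεDc : ∀ T ∈ A \ D, excess v x T ≤ ψ - ε := by
    intro T hT
    have h : (A \ D).Nonempty := ⟨T, hT⟩
    rw [hε, dif_pos h]
    have := Finset.le_sup' (excess v x) hT
    linarith
  set δ : ℝ := ε / (2 * (Y + 1)) with hδ
  have hδ0 : 0 < δ := div_pos hε0 (by linarith)
  have hδY : δ * Y < ε / 2 := by
    rw [hδ, div_mul_eq_mul_div, div_lt_div_iff₀ (by linarith) (by norm_num)]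
    nlinarith
  refine ⟨fun k => x k + δ * y k, ?_, ?_⟩
  · rw [Finset.sum_add_distrib, hx, ← Finset.mul_sum, hy, mul_zero, add_zero]
  set z : α → ℝ := fun k => x k + δ * y k with hz
  have hez : ∀ S : Finset α, excess v z S = excess v x S - δ * ∑ k ∈ S, y k := by
    intro S
    simp only [excess, hz, Finset.sum_add_distrib, ← Finset.mul_sum]
    ring
  -- key inequalities
  have key1 : ∀ S ∈ D, excess v z S ≤ excess v x S := by
    intro S hS
    rw [hez]
    have := hpos S hS
    nlinarith
  have key2 : excess v z S₀ < excess v x S₀ := by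
    rw [hez]; nlinarith
  have keyzD : ∀ S ∈ D, ψ - ε / 2 < excess v z S := by
    intro S hS
    rw [hez]
    have h1 := hmemD S hS
    have h2 := hYb S
    have h3 := abs_le.mp h2
    nlinarith
  have keyzDc : ∀ T ∈ A \ D, excess v z T < ψ - ε / 2 := by
    intro T hT
    rw [hez]
    have h1 := hεDc T hT
    have h3 := abs_le.mp (hYb T)
    nlinarith
  -- decompositions
  have hdx := theta_decomp v x D hDA (by
    intro S hS T hT
    exact le_trans (le_of_lt (hmemDc T hT)) (hmemD S hS))
  have hdz := theta_decomp v z D hDA (by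
    intro S hS T hT
    exact le_trans (le_of_lt (keyzDc T hT)) (le_of_lt (keyzD S hS)))
  rw [hdx, hdz]
  -- lex comparison on the D-part
  have hf2 : List.Forall₂ (· ≤ ·)
      (List.insertionSort (· ≥ ·) ((D.toList).map (excess v z)))
      (List.insertionSort (· ≥ ·) ((D.toList).map (excess v x))) :=
    sorted_le_of_pointwise _ _ _ (fun S hS => key1 S (Finset.mem_toList.mp hS))
  have hsum : ((D.toList).map (excess v z)).sum < ((D.toList).map (excess v x)).sum := by
    rw [Finset.sum_map_toList, Finset.sum_map_toList]
    exact Finset.sum_lt_sum (fun S hS => key1 S hS) ⟨S₀, hS₀, key2⟩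
  have hneq : List.insertionSort (· ≥ ·) ((D.toList).map (excess v z)) ≠
      List.insertionSort (· ≥ ·) ((D.toList).map (excess v x)) := by
    intro h
    have h1 := (List.perm_insertionSort (· ≥ ·) ((D.toList).map (excess v z))).sum_eq
    have h2 := (List.perm_insertionSort (· ≥ ·) ((D.toList).map (excess v x))).sum_eq
    rw [← h1, ← h2, h] at hsum
    exact lt_irrefl _ hsum
  exact lex_append hf2 hneq _ _
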